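/- Let λ₀ ≤ λ₁ ≤ … ≤ λₙ be positive integers with gcd 1 and h := Σᵢ λᵢ, and suppose P = conv(ρ₀,…,ρₙ) ⊂ ℤⁿ is a simplex with Σᵢ λᵢρᵢ = 0 whose only interior lattice point is the origin (the 'canonical' condition). Then for every k ∈ {2,…,n}: λ_k/h ≤ 1/(n−k+2). -/
import Mathlib


/-- The real vector associated to an integer vector. -/
def coeVec {n : ℕ} (v : Fin n → ℤ) : Fin n → ℝ := fun j => (v j : ℝ)

set_option maxHeartbeats 1000000 in
/-- **Upper bound on the weights of a canonical fake weighted projective space.**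
Let λ₀ ≤ λ₁ ≤ … ≤ λₙ be positive integers with gcd 1, h = Σλᵢ, and let
P = conv(ρ₀,…,ρₙ) be a simplex with primitive vertices in ℤⁿ satisfying Σλᵢρᵢ = 0,
whose only interior lattice point is the origin. Then for every k with 2 ≤ k ≤ n,
λ_k/h ≤ 1/(n−k+2). -/
theorem canonical_weight_bound (n : ℕ) (ρ : Fin (n + 1) → Fin n → ℤ)
    (lam : Fin (n + 1) → ℤ) (hpos : ∀ i, 0 < lam i) (hmono : Monotone lam)
    (hgcd : Finset.univ.gcd lam = 1)
    (hprim : ∀ i, Finset.univ.gcd (ρ i) = 1)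
    (hrel : ∑ i, lam i • ρ i = 0)
    (haff : AffineIndependent ℝ (fun i => coeVec (ρ i)))
    (P : Set (Fin n → ℝ))
    (hP : P = convexHull ℝ (Set.range fun i => coeVec (ρ i)))
    (h0 : (0 : Fin n → ℝ) ∈ interior P)
    (hcan : ∀ x : Fin n → ℤ, coeVec x ∈ interior P → x = 0) :
    ∀ k : Fin (n + 1), 2 ≤ k.val →
      (lam k : ℝ) / (∑ i, (lam i : ℝ)) ≤ 1 / ((n : ℝ) - (k.val : ℝ) + 2) := by
  intro k hk2
  set f : Fin (n + 1) → Fin n → ℝ := fun i => coeVec (ρ i) with hf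
  -- the affine basis
  have htop : affineSpan ℝ (Set.range f) = ⊤ := by
    rw [haff.affineSpan_eq_top_iff_card_eq_finrank_add_one]
    simp [Module.finrank_fintype_fun_eq_card]
  let b : AffineBasis (Fin (n + 1)) ℝ (Fin n → ℝ) := ⟨f, haff, htop⟩
  have hint : interior P = {x | ∀ i, 0 < b.coord i x} := by
    rw [hP]
    exact b.interior_convexHull
  -- barycentric coordinates of linear combinations
  have coord_comb : ∀ (w : Fin (n + 1) → ℝ), (∑ j, w j) = 1 →
      ∀ i, b.coord i (∑ j, w j • f j) = w i := by
    intro w hw i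
    rw [← Finset.univ.affineCombination_eq_linear_combination f w hw]
    exact b.coord_apply_combination_of_mem (Finset.mem_univ i) hw
  -- coordinatewise real version of the relation
  have hrelj : ∀ j, ∑ i, (lam i : ℝ) * (ρ i j : ℝ) = 0 := by
    intro j
    have h1 := congrFun hrel j
    simp only [Finset.sum_apply, Pi.smul_apply, smul_eq_mul, Pi.zero_apply] at h1
    exact_mod_cast h1
  -- basic positivity
  have hH : 0 < ∑ i, (lam i : ℝ) :=
    Finset.sum_pos (fun i _ => by exact_mod_cast hpos i) Finset.univ_nonempty
  set H : ℝ := ∑ i, (lam i : ℝ) with hHdef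
  have hkn : k.val ≤ n := Nat.lt_succ_iff.mp k.isLt
  set M : ℝ := (n : ℝ) - (k.val : ℝ) + 2 with hMdef
  have hM : 0 < M := by
    have : (k.val : ℝ) ≤ (n : ℝ) := by exact_mod_cast hkn
    linarith
  rw [div_le_div_iff₀ hH hM, one_mul]
  by_contra hcon
  push_neg at hcon
  -- the index set S = {k, ..., n}
  set S : Finset (Fin (n + 1)) := Finset.Ici k with hSdef
  have hcardS : (S.card : ℝ) = (n : ℝ) + 1 - (k.val : ℝ) := by
    rw [hSdef, Fin.card_Ici]
    have : k.val ≤ n + 1 := le_of_lt k.isLt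
    push_cast [Nat.cast_sub this]
    ring
  have hc1 : (S.card : ℝ) + 1 = M := by rw [hcardS, hMdef]; ring
  -- the weights
  set w : Fin (n + 1) → ℝ :=
    fun i => (M / H) * (lam i : ℝ) - (if i ∈ S then 1 else 0) with hwdef
  have hindsum : (∑ i, if i ∈ S then (1 : ℝ) else 0) = S.card := by
    rw [Finset.sum_ite_mem, Finset.univ_inter, Finset.sum_const, nsmul_eq_mul, mul_one]
  have hwsum : (∑ i, w i) = 1 := by
    simp only [hwdef, Finset.sum_sub_distrib, ← Finset.mul_sum, ← hHdef, hindsum]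
    rw [div_mul_cancel₀ _ (ne_of_gt hH)]
    linarith [hc1]
  -- the candidate interior lattice point
  set v : Fin n → ℤ := fun j => -∑ i ∈ S, ρ i j with hvdef
  have hcomb : coeVec v = ∑ i, w i • f i := by
    funext j
    have h2 : (∑ i, w i • f i) j = ∑ i, w i * (ρ i j : ℝ) := by
      simp [Finset.sum_apply, hf, coeVec]
    rw [h2]
    simp only [hwdef, sub_mul, Finset.sum_sub_distrib, ite_mul, one_mul, zero_mul, mul_assoc,
      ← Finset.mul_sum, hrelj j, mul_zero, zero_sub, Finset.sum_ite_mem, Finset.univ_inter]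
    simp only [coeVec, hvdef]
    push_cast
    ring
  have hwpos : ∀ i, 0 < w i := by
    intro i
    have hli : (0 : ℝ) < lam i := by exact_mod_cast hpos i
    by_cases hiS : i ∈ S
    · have hki : lam k ≤ lam i := hmono (Finset.mem_Ici.mp hiS)
      have hkiR : (lam k : ℝ) ≤ (lam i : ℝ) := by exact_mod_cast hki
      have hlt : H < M * (lam i : ℝ) := by nlinarith
      simp only [hwdef, hiS, if_pos]
      rw [div_mul_eq_mul_div, sub_pos, lt_div_iff₀ hH, one_mul]
      linarith
    · simp only [hwdef, hiS, if_neg, not_false_iff, sub_zero]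
      positivity
  have hvint : coeVec v ∈ interior P := by
    rw [hint]
    intro i
    rw [hcomb, coord_comb w hwsum i]
    exact hwpos i
  have hv0 : v = 0 := hcan v hvint
  -- hence ∑_{i ∈ S} ρ i = 0, giving a second barycentric representation of 0
  have hSsum : ∀ j, (∑ i ∈ S, (ρ i j : ℝ)) = 0 := by
    intro j
    have := congrFun hv0 j
    simp only [hvdef, Pi.zero_apply, neg_eq_zero] at this
    exact_mod_cast this
  have hcS : (0 : ℝ) < (S.card : ℝ) := by
    have : (k.val : ℝ) ≤ (n : ℝ) := by exact_mod_cast hkn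
    rw [hcardS]; linarith
  set u : Fin (n + 1) → ℝ := fun i => if i ∈ S then 1 / (S.card : ℝ) else 0 with hudef
  have husum : (∑ i, u i) = 1 := by
    simp only [hudef, Finset.sum_ite_mem, Finset.univ_inter, Finset.sum_const, nsmul_eq_mul]
    rw [mul_one_div, div_self (ne_of_gt hcS)]
  have hucomb : (∑ i, u i • f i) = 0 := by
    funext j
    simp only [Finset.sum_apply, Pi.smul_apply, smul_eq_mul, Pi.zero_apply, hudef, ite_mul,
      zero_mul, Finset.sum_ite_mem, Finset.univ_inter]
    rw [← Finset.mul_sum]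
    have : (∑ i ∈ S, f i j) = 0 := by
      simpa only [hf, coeVec] using hSsum j
    rw [this, mul_zero]
  set t : Fin (n + 1) → ℝ := fun i => (lam i : ℝ) / H with htdef
  have htsum : (∑ i, t i) = 1 := by
    simp only [htdef, ← Finset.sum_div, ← hHdef]
    field_simp
  have htcomb : (∑ i, t i • f i) = 0 := by
    funext j
    simp only [Finset.sum_apply, Pi.smul_apply, smul_eq_mul, Pi.zero_apply, htdef,
      div_mul_eq_mul_div, ← Finset.sum_div]
    have : (∑ i, (lam i : ℝ) * f i j) = 0 := by
      simpa only [hf, coeVec] using hrelj j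
    rw [this, zero_div]
  -- compare the coordinate at index 0
  have e1 : b.coord 0 (0 : Fin n → ℝ) = u 0 := by rw [← hucomb]; exact coord_comb u husum 0
  have e2 : b.coord 0 (0 : Fin n → ℝ) = t 0 := by rw [← htcomb]; exact coord_comb t htsum 0
  have h0S : (0 : Fin (n + 1)) ∉ S := by
    rw [hSdef, Finset.mem_Ici]
    intro h
    have : k.val ≤ 0 := h
    omega
  have hu0 : u 0 = 0 := by simp [hudef, h0S]
  have ht0 : 0 < t 0 := by
    have : (0 : ℝ) < lam 0 := by exact_mod_cast hpos 0
    exact div_pos this hH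
  rw [e1, hu0] at e2
  exact absurd e2.symm (ne_of_gt ht0)
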